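/- Let G be a connected graph in which every edge belongs to at most one cycle (a cactus graph), containing a basic 5-cycle C with vertices y1,y4,y2,y3,y5 in cyclic order where y3,y4,y5 have degree 2 in G. Let T be the induced subgraph of G on V(G)\{y3,y4,y5}, and for a in {1,2} let T_a be the set of vertices z in V(T)\{y1,y2} for which there is a path in T connecting z to y_a. Then T_1 and T_2 are disjoint, and V(T) is the disjoint union of T_1, {y1,y2}, and T_2. -/

import Mathlib

/-- `C` is a vertex cover of `G`: every edge has at least one endpoint in `C`. -/
def IsVC {V : Type*} (G : SimpleGraph V) (C : Set V) : Prop :=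
  ∀ ⦃u v : V⦄, G.Adj u v → u ∈ C ∨ v ∈ C

/-- The graph obtained from `G` by deleting the vertices in `s` (keeping the ambient
vertex type): the induced subgraph of `G` on `V(G) \ s`. -/
def delGraph {V : Type*} (G : SimpleGraph V) (s : Set V) : SimpleGraph V where
  Adj u v := G.Adj u v ∧ u ∉ s ∧ v ∉ s
  symm := ⟨fun u v ⟨h, hu, hv⟩ => ⟨h.symm, hv, hu⟩⟩
  loopless := ⟨fun u ⟨h, _, _⟩ => G.loopless.irrefl u h⟩

/-- `G` is a cactus graph: it is connected and each edge belongs to at most one cycle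
(cycles being identified with their edge sets). -/
def IsCactus {V : Type*} (G : SimpleGraph V) : Prop :=
  G.Connected ∧
    ∀ (u v : V) (c : G.Walk u u) (c' : G.Walk v v), c.IsCycle → c'.IsCycle →
      ∀ e, e ∈ c.edges → e ∈ c'.edges → {e' | e' ∈ c.edges} = {e' | e' ∈ c'.edges}

/-- With `T` the induced subgraph of `G` on `V(G) \ {y3,y4,y5}`, the set `T_a` of
vertices of `T` other than `y1, y2` joined to `ya` by a path in `T`. -/
def sideSet {V : Type*} (G : SimpleGraph V) (y1 y2 y3 y4 y5 ya : V) : Set V :=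
  {z | z ∉ ({y1, y2, y3, y4, y5} : Set V) ∧
    (delGraph G {y3, y4, y5}).Reachable z ya}

lemma delGraph_le {V : Type*} (G : SimpleGraph V) (s : Set V) : delGraph G s ≤ G :=
  fun _ _ h => h.1

lemma delGraph_support_not_mem {V : Type*} {G : SimpleGraph V} {s : Set V} :
    ∀ {u v : V} (w : (delGraph G s).Walk u v), u ∉ s → ∀ x ∈ w.support, x ∉ s := by
  intro u v w
  induction w with
  | nil => intro hu x hx; simp at hx; subst hx; exact hu
  | cons h q ih =>
    intro hu x hx
    rw [SimpleGraph.Walk.support_cons] at hx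
    rcases List.mem_cons.1 hx with rfl | hx
    · exact hu
    · exact ih h.2.2 x hx

lemma mapLe_support {V : Type*} {G G' : SimpleGraph V} (h : G ≤ G') {u v : V}
    (p : G.Walk u v) : (p.mapLe h).support = p.support := by
  have hid : ⇑(SimpleGraph.Hom.ofLE h) = id := rfl
  simp [SimpleGraph.Walk.support_map, hid]

lemma mapLe_edges {V : Type*} {G G' : SimpleGraph V} (h : G ≤ G') {u v : V}
    (p : G.Walk u v) : (p.mapLe h).edges = p.edges := by
  have hid : ⇑(SimpleGraph.Hom.ofLE h) = id := rfl
  simp [SimpleGraph.Walk.edges_map, hid, Sym2.map_id]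

lemma reach_lemma {V : Type*} {G : SimpleGraph V} {y1 y2 y3 y4 y5 : V}
    (hy3 : ∀ z, G.Adj y3 z → z = y2 ∨ z = y5)
    (hy4 : ∀ z, G.Adj y4 z → z = y1 ∨ z = y2)
    (hy5 : ∀ z, G.Adj y5 z → z = y3 ∨ z = y1)
    (n13 : y1 ≠ y3) (n14 : y1 ≠ y4) (n15 : y1 ≠ y5)
    (n23 : y2 ≠ y3) (n24 : y2 ≠ y4) (n25 : y2 ≠ y5) :
    ∀ {z w : V} (_ : G.Walk z w), w = y1 → z ∉ ({y3, y4, y5} : Set V) →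
      z = y1 ∨ z = y2 ∨ (delGraph G {y3, y4, y5}).Reachable z y1 ∨
        (delGraph G {y3, y4, y5}).Reachable z y2 := by
  intro z w p
  induction p with
  | nil => intro hw _; exact Or.inl hw
  | @cons z u b h q ih =>
    intro hw hz
    by_cases hz1 : z = y1
    · exact Or.inl hz1
    by_cases hz2 : z = y2
    · exact Or.inr (Or.inl hz2)
    by_cases hu : u ∈ ({y3, y4, y5} : Set V)
    · -- then z is a neighbor of y3/y4/y5, so z ∈ {y1,y2,y3,y5}: contradiction
      exfalso
      rcases hu with rfl | rfl | rfl
      · rcases hy3 z h.symm with rfl | rfl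
        · exact hz2 rfl
        · exact hz (by simp)
      · rcases hy4 z h.symm with rfl | rfl
        · exact hz1 rfl
        · exact hz2 rfl
      · rcases hy5 z h.symm with rfl | rfl
        · exact hz (by simp)
        · exact hz1 rfl
    · have hadj : (delGraph G {y3, y4, y5}).Adj z u := ⟨h, hz, hu⟩
      rcases ih hw hu with rfl | rfl | hr | hr
      · exact Or.inr (Or.inr (Or.inl hadj.reachable))
      · exact Or.inr (Or.inr (Or.inr hadj.reachable))
      · exact Or.inr (Or.inr (Or.inl (hadj.reachable.trans hr)))
      · exact Or.inr (Or.inr (Or.inr (hadj.reachable.trans hr)))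

/-- For a cactus graph `G` with a basic 5-cycle `y1,y4,y2,y3,y5` (cyclic order,
`y3,y4,y5` of degree 2), the sets `T_1` and `T_2` are disjoint and `V(T)` is the
disjoint union of `T_1`, `{y1, y2}` and `T_2`. -/
theorem sideSets_partition {V : Type*} (G : SimpleGraph V)
    (y1 y2 y3 y4 y5 : V)
    (hcactus : IsCactus G)
    (hne : List.Pairwise Ne [y1, y2, y3, y4, y5])
    (h14 : G.Adj y1 y4) (h42 : G.Adj y4 y2) (h23 : G.Adj y2 y3)
    (h35 : G.Adj y3 y5) (h51 : G.Adj y5 y1)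
    (h12 : ¬ G.Adj y1 y2)
    (hy3 : ∀ z, G.Adj y3 z → z = y2 ∨ z = y5)
    (hy4 : ∀ z, G.Adj y4 z → z = y1 ∨ z = y2)
    (hy5 : ∀ z, G.Adj y5 z → z = y3 ∨ z = y1)
    (T1 T2 : Set V)
    (hT1 : T1 = sideSet G y1 y2 y3 y4 y5 y1)
    (hT2 : T2 = sideSet G y1 y2 y3 y4 y5 y2) :
    Disjoint T1 T2 ∧ Disjoint T1 ({y1, y2} : Set V) ∧ Disjoint T2 ({y1, y2} : Set V) ∧
      T1 ∪ ({y1, y2} : Set V) ∪ T2 = ({y3, y4, y5} : Set V)ᶜ := by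
  simp only [List.pairwise_cons, List.mem_cons, List.not_mem_nil, or_false,
    List.mem_singleton, List.Pairwise.nil, and_true, forall_eq_or_imp, forall_eq] at hne
  obtain ⟨⟨n12, n13, n14, n15⟩, ⟨n23, n24, n25⟩, ⟨n34, n35⟩, n45⟩ := hne
  set D : SimpleGraph V := delGraph G {y3, y4, y5} with hD
  -- the basic 5-cycle as a cycle
  let c5 : G.Walk y1 y1 :=
    .cons h14 (.cons h42 (.cons h23 (.cons h35 (.cons h51 .nil))))
  have hc5 : c5.IsCycle := by
    rw [SimpleGraph.Walk.isCycle_def]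
    refine ⟨⟨?_⟩, by simp [c5], ?_⟩
    · simp [c5, Sym2.eq_iff, n12, n13, n14, n15, n23, n24, n25, n34, n35, n45,
        n12.symm, n13.symm, n14.symm, n15.symm, n23.symm, n24.symm, n25.symm,
        n34.symm, n35.symm, n45.symm]
    · simp [c5, n12, n13, n14, n15, n23, n24, n25, n34, n35, n45,
        n12.symm, n13.symm, n14.symm, n15.symm, n23.symm, n24.symm, n25.symm,
        n34.symm, n35.symm, n45.symm]
  -- disjointness of T1 and T2
  have hdisj : Disjoint T1 T2 := by
    rw [Set.disjoint_left]
    intro z hz1 hz2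
    rw [hT1] at hz1; rw [hT2] at hz2
    have hr : D.Reachable y2 y1 := hz2.2.symm.trans hz1.2
    classical
    obtain ⟨q⟩ := hr
    let p : D.Path y2 y1 := q.toPath
    have hp : (p : D.Walk y2 y1).IsPath := p.2
    have hy2ns : y2 ∉ ({y3, y4, y5} : Set V) := by simp [n23, n24, n25]
    have hsup : ∀ x ∈ (p : D.Walk y2 y1).support, x ∉ ({y3, y4, y5} : Set V) :=
      delGraph_support_not_mem _ hy2ns
    let pG : G.Walk y2 y1 := (p : D.Walk y2 y1).mapLe (delGraph_le G _)
    have hsupG : pG.support = (p : D.Walk y2 y1).support := mapLe_support _ _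
    have hedgG : pG.edges = (p : D.Walk y2 y1).edges := mapLe_edges _ _
    have hy4pG : y4 ∉ pG.support := by
      rw [hsupG]; intro hmem; exact hsup y4 hmem (by simp)
    have hy3pG : y3 ∉ pG.support := by
      rw [hsupG]; intro hmem; exact hsup y3 hmem (by simp)
    let c1 : G.Walk y1 y1 := .cons h14 (.cons h42 pG)
    have hc1 : c1.IsCycle := by
      rw [SimpleGraph.Walk.isCycle_def]
      refine ⟨⟨?_⟩, by simp [c1], ?_⟩
      · -- edges nodup
        simp only [c1, SimpleGraph.Walk.edges_cons, List.nodup_cons, List.mem_cons]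
        refine ⟨?_, ?_, ?_⟩
        · rintro (he | he)
          · rw [Sym2.eq_iff] at he
            rcases he with ⟨h1, h2⟩ | ⟨h1, h2⟩
            · exact n12 (h1.trans h2)
            · exact n12 h1
          · exact hy4pG (pG.snd_mem_support_of_mem_edges he)
        · intro he
          exact hy4pG (pG.fst_mem_support_of_mem_edges he)
        · rw [hedgG]; exact hp.1.edges_nodup
      · -- support tail nodup
        simp only [c1, SimpleGraph.Walk.support_cons, List.tail_cons, List.nodup_cons]
        exact ⟨hy4pG, by rw [hsupG]; exact hp.2⟩
    have hmem1 : s(y1, y4) ∈ c1.edges := by simp [c1]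
    have hmem5 : s(y1, y4) ∈ c5.edges := by simp [c5]
    have hsets := hcactus.2 y1 y1 c1 c5 hc1 hc5 s(y1, y4) hmem1 hmem5
    have h23mem : s(y2, y3) ∈ c1.edges := by
      have : s(y2, y3) ∈ {e' | e' ∈ c5.edges} := by simp [c5]
      rw [← hsets] at this
      exact this
    simp only [c1, SimpleGraph.Walk.edges_cons, List.mem_cons] at h23mem
    rcases h23mem with he | he | he
    · rw [Sym2.eq_iff] at he
      rcases he with ⟨h1, h2⟩ | ⟨h1, h2⟩
      · exact n12 h1.symm
      · exact n24 h1
    · rw [Sym2.eq_iff] at he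
      rcases he with ⟨h1, h2⟩ | ⟨h1, h2⟩
      · exact n24 h1
      · exact n34 h2
    · exact hy3pG (pG.snd_mem_support_of_mem_edges he)
  have hd1 : Disjoint T1 ({y1, y2} : Set V) := by
    rw [Set.disjoint_left]
    intro z hz1 hz2
    rw [hT1] at hz1
    exact hz1.1 (by rcases hz2 with rfl | rfl <;> simp)
  have hd2 : Disjoint T2 ({y1, y2} : Set V) := by
    rw [Set.disjoint_left]
    intro z hz1 hz2
    rw [hT2] at hz1
    exact hz1.1 (by rcases hz2 with rfl | rfl <;> simp)
  refine ⟨hdisj, hd1, hd2, ?_⟩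
  ext z
  simp only [Set.mem_union, Set.mem_compl_iff]
  constructor
  · rintro ((hz | hz) | hz)
    · rw [hT1] at hz
      intro hmem
      exact hz.1 (by rcases hmem with rfl | rfl | rfl <;> simp)
    · rcases hz with rfl | rfl
      · simp [n13, n14, n15]
      · simp [n23, n24, n25]
    · rw [hT2] at hz
      intro hmem
      exact hz.1 (by rcases hmem with rfl | rfl | rfl <;> simp)
  · intro hz
    by_cases hz1 : z = y1
    · exact Or.inl (Or.inr (by simp [hz1]))
    by_cases hz2 : z = y2
    · exact Or.inl (Or.inr (by simp [hz2]))
    obtain ⟨w⟩ := (hcactus.1 z y1 : G.Reachable z y1)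
    rcases reach_lemma hy3 hy4 hy5 n13 n14 n15 n23 n24 n25 w rfl hz with
      rfl | rfl | hr | hr
    · exact absurd rfl hz1
    · exact absurd rfl hz2
    · refine Or.inl (Or.inl ?_)
      rw [hT1]
      refine ⟨?_, hr⟩
      intro hmem
      rcases hmem with rfl | rfl | rfl | rfl | rfl
      · exact hz1 rfl
      · exact hz2 rfl
      · exact hz (by simp)
      · exact hz (by simp)
      · exact hz (by simp)
    · refine Or.inr ?_
      rw [hT2]
      refine ⟨?_, hr⟩
      intro hmem
      rcases hmem with rfl | rfl | rfl | rfl | rfl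
      · exact hz1 rfl
      · exact hz2 rfl
      · exact hz (by simp)
      · exact hz (by simp)
      · exact hz (by simp)
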